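/- Let 0 < δ < 1 and let D = (V,A) be a finite complete multidigraph on more than 1/δ vertices whose arc set is the union of k quasi orders ≺₁,…,≺_k. Then there exists a probability distribution w on V and a partition of V into sets T₁,…,T_k, R such that for every i ∈ [k] and x ∈ T_i, w(x) ≤ 2δ and w(N⁻_i(x)) ≥ 1/(2k), and for every x ∈ R, δ ≤ w(x) ≤ 4δ. -/

import Mathlib

open Finset

section Stmt8Aux

variable {V : Type*} [Fintype V] [DecidableEq V]

/-- The set of probability vectors on `V` capped by `γ`. -/
def stmt8Wset (V : Type*) [Fintype V] (γ : ℝ) : Set (V → ℝ) :=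
  {w | (∀ x, 0 ≤ w x) ∧ (∀ x, w x ≤ γ) ∧ ∑ x, w x = 1}

omit [DecidableEq V] in
lemma stmt8_skew_sum_zero (B : V → V → ℝ) (hB : ∀ x y, B x y = -B y x) (w : V → ℝ) :
    ∑ x, (∑ y, w y * B y x) * w x = 0 := by
  have h1 : ∑ x, (∑ y, w y * B y x) * w x = ∑ x, ∑ y, w y * B y x * w x := by
    refine Finset.sum_congr rfl fun x _ => ?_
    rw [Finset.sum_mul]
  have h2 : (∑ x : V, ∑ y : V, w y * B y x * w x)
      = ∑ x : V, ∑ y : V, w x * B x y * w y := Finset.sum_comm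
  have h3 : (∑ x : V, ∑ y : V, w x * B x y * w y)
      = -∑ x : V, ∑ y : V, w y * B y x * w x := by
    rw [← Finset.sum_neg_distrib]
    refine Finset.sum_congr rfl fun x _ => ?_
    rw [← Finset.sum_neg_distrib]
    refine Finset.sum_congr rfl fun y _ => ?_
    rw [hB x y]; ring
  rw [h1]
  have := h2.trans h3
  linarith

/-- Existence of an "unbeatable" capped strategy for a finite symmetric game. -/
lemma stmt8_exists_good (B : V → V → ℝ) (hB : ∀ x y, B x y = -B y x) (γ : ℝ)
    (hne : (stmt8Wset V γ).Nonempty) :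
    ∃ w ∈ stmt8Wset V γ, ∀ w' ∈ stmt8Wset V γ,
      0 ≤ ∑ x, w' x * (∑ y, w y * B y x) := by
  classical
  set W := stmt8Wset V γ with hWdef
  -- the linear payoff map
  set L : (V → ℝ) →ₗ[ℝ] (V → ℝ) :=
    { toFun := fun w => fun x => ∑ y, w y * B y x
      map_add' := by
        intro a b; funext x
        simp [add_mul, Finset.sum_add_distrib]
      map_smul' := by
        intro c a; funext x
        simp [Finset.mul_sum, mul_assoc] } with hLdef
  have hLapp : ∀ w : V → ℝ, ∀ x, L w x = ∑ y, w y * B y x := fun w x => rfl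
  -- convexity of W
  have hWconv : Convex ℝ W := by
    intro p hp q hq a b ha hb hab
    refine ⟨fun x => ?_, fun x => ?_, ?_⟩
    · have := hp.1 x; have := hq.1 x
      simp only [Pi.add_apply, Pi.smul_apply, smul_eq_mul]
      nlinarith
    · have h1 := hp.2.1 x; have h2 := hq.2.1 x
      simp only [Pi.add_apply, Pi.smul_apply, smul_eq_mul]
      have h3 : a * p x ≤ a * γ := mul_le_mul_of_nonneg_left h1 ha
      have h4 : b * q x ≤ b * γ := mul_le_mul_of_nonneg_left h2 hb
      have h5 : a * γ + b * γ = γ := by rw [← add_mul, hab, one_mul]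
      linarith
    · have hp2 := hp.2.2; have hq2 := hq.2.2
      simp only [Pi.add_apply, Pi.smul_apply, smul_eq_mul]
      rw [Finset.sum_add_distrib, ← Finset.mul_sum, ← Finset.mul_sum, hp2, hq2]
      linarith
  -- compactness of W
  have hWclosed : IsClosed W := by
    have : W = (⋂ x : V, {w : V → ℝ | w x ∈ Set.Icc 0 γ}) ∩ {w : V → ℝ | (∑ x, w x) = 1} := by
      ext w
      simp only [hWdef, stmt8Wset, Set.mem_setOf_eq, Set.mem_inter_iff, Set.mem_iInter,
        Set.mem_Icc]
      constructor
      · rintro ⟨h1, h2, h3⟩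
        exact ⟨fun x => ⟨h1 x, h2 x⟩, h3⟩
      · rintro ⟨h1, h3⟩
        exact ⟨fun x => (h1 x).1, fun x => (h1 x).2, h3⟩
    rw [this]
    refine IsClosed.inter (isClosed_iInter fun x => ?_) ?_
    · exact IsClosed.preimage (continuous_apply x) isClosed_Icc
    · exact IsClosed.preimage (continuous_finset_sum _ fun i _ => continuous_apply i)
        isClosed_singleton
  have hWcomp : IsCompact W := by
    refine IsCompact.of_isClosed_subset
      (isCompact_univ_pi fun _ : V => (isCompact_Icc : IsCompact (Set.Icc (0:ℝ) γ)))
      hWclosed ?_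
    intro w hw x _
    exact ⟨hw.1 x, hw.2.1 x⟩
  -- the image C and the dual set K
  set C := L '' W with hCdef
  have hCcomp : IsCompact C := hWcomp.image L.continuous_of_finiteDimensional
  have hCconv : Convex ℝ C := hWconv.linear_image L
  set K := {v : V → ℝ | ∀ w' ∈ W, 0 ≤ ∑ x, w' x * v x} with hKdef
  have hKclosed : IsClosed K := by
    have : K = ⋂ (w' : V → ℝ) (_ : w' ∈ W), {v : V → ℝ | 0 ≤ ∑ x, w' x * v x} := by
      ext v; simp [hKdef]
    rw [this]
    refine isClosed_iInter fun w' => isClosed_iInter fun _ => ?_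
    exact isClosed_le continuous_const
      (continuous_finset_sum _ fun x _ => continuous_const.mul (continuous_apply x))
  have hKconv : Convex ℝ K := by
    intro p hp q hq a b ha hb hab w' hw'
    have h1 := hp w' hw'; have h2 := hq w' hw'
    simp only [Pi.add_apply, Pi.smul_apply, smul_eq_mul]
    have : ∑ x, w' x * (a * p x + b * q x)
        = a * ∑ x, w' x * p x + b * ∑ x, w' x * q x := by
      rw [Finset.mul_sum, Finset.mul_sum, ← Finset.sum_add_distrib]
      refine Finset.sum_congr rfl fun x _ => ?_
      ring
    rw [this]
    nlinarith
  by_contra hcon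
  push_neg at hcon
  have hdisj : Disjoint C K := by
    rw [Set.disjoint_left]
    rintro v ⟨w, hwW, rfl⟩ hvK
    obtain ⟨w', hw'W, hlt⟩ := hcon w hwW
    have := hvK w' hw'W
    rw [show (∑ x, w' x * L w x) = ∑ x, w' x * ∑ y, w y * B y x from rfl] at this
    linarith
  obtain ⟨F, a, b, hCa, hab, hKb⟩ :=
    geometric_hahn_banach_compact_closed hCconv hCcomp hKconv hKclosed hdisj
  have h0K : (0 : V → ℝ) ∈ K := by
    intro w' _; simp
  have hb0 : b < 0 := by
    have := hKb 0 h0K; simpa using this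
  have hFK : ∀ v ∈ K, 0 ≤ F v := by
    intro v hv
    by_contra hneg
    push_neg at hneg
    have hscale : ∀ t : ℝ, 0 ≤ t → (t • v) ∈ K := by
      intro t ht w' hw'
      have h := hv w' hw'
      simp only [Pi.smul_apply, smul_eq_mul]
      have : ∑ x, w' x * (t * v x) = t * ∑ x, w' x * v x := by
        rw [Finset.mul_sum]; refine Finset.sum_congr rfl fun x _ => ?_; ring
      rw [this]
      positivity
    set t := b / F v with htdef
    have ht : 0 < t := by
      rw [htdef, div_pos_iff]; right; exact ⟨hb0, hneg⟩
    have hmem := hKb (t • v) (hscale t ht.le)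
    rw [map_smul, smul_eq_mul, htdef, div_mul_cancel₀ b (ne_of_lt hneg)] at hmem
    exact lt_irrefl b hmem
  set u := fun x => F (Pi.single x (1:ℝ)) with hudef
  have hrepr : ∀ v : V → ℝ, F v = ∑ x, v x * u x := by
    intro v
    have hv : v = ∑ x, v x • (Pi.single x (1:ℝ) : V → ℝ) := by
      funext j
      rw [Finset.sum_apply]
      simp [Pi.single_apply, eq_comm]
    conv_lhs => rw [hv]
    rw [map_sum]
    refine Finset.sum_congr rfl fun x _ => ?_
    rw [map_smul, smul_eq_mul]
  have hsingleK : ∀ x : V, (Pi.single x (1:ℝ)) ∈ K := by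
    intro x w' hw'
    have : ∑ z, w' z * (Pi.single x (1:ℝ) : V → ℝ) z = w' x := by
      simp [Pi.single_apply]
    rw [this]
    exact hw'.1 x
  have hu0 : ∀ x, 0 ≤ u x := fun x => hFK _ (hsingleK x)
  set S := ∑ x, u x with hSdef
  have hcap : ∀ x, u x ≤ γ * S := by
    intro x₀
    have hvK : ((fun _ : V => γ) - (Pi.single x₀ (1:ℝ) : V → ℝ)) ∈ K := by
      intro w' hw'
      have hsum : ∑ z, w' z * ((fun _ : V => γ) - (Pi.single x₀ (1:ℝ) : V → ℝ)) z
          = γ * (∑ z, w' z) - w' x₀ := by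
        simp only [Pi.sub_apply]
        rw [show (∑ z, w' z * ((fun _ : V => γ) z - (Pi.single x₀ (1:ℝ) : V → ℝ) z))
            = ∑ z, (γ * w' z - w' z * (Pi.single x₀ (1:ℝ) : V → ℝ) z) from
          Finset.sum_congr rfl fun z _ => by ring]
        rw [Finset.sum_sub_distrib, ← Finset.mul_sum]
        simp [Pi.single_apply]
      rw [hsum, hw'.2.2, mul_one]
      have := hw'.2.1 x₀
      linarith
    have h := hFK _ hvK
    rw [hrepr] at h
    have hsum2 : ∑ x, ((fun _ : V => γ) - (Pi.single x₀ (1:ℝ) : V → ℝ)) x * u x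
        = γ * S - u x₀ := by
      simp only [Pi.sub_apply]
      rw [show (∑ x, (((fun _ : V => γ) x - (Pi.single x₀ (1:ℝ) : V → ℝ) x) * u x))
          = ∑ x, (γ * u x - (Pi.single x₀ (1:ℝ) : V → ℝ) x * u x) from
        Finset.sum_congr rfl fun x _ => by ring]
      rw [Finset.sum_sub_distrib, ← Finset.mul_sum, hSdef]
      simp [Pi.single_apply]
    rw [hsum2] at h
    linarith
  obtain ⟨wu, hwu⟩ := hne
  have hCwu : F (L wu) < a := hCa _ ⟨wu, hwu, rfl⟩
  have hSpos : 0 < S := by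
    rcases eq_or_lt_of_le (Finset.sum_nonneg fun x _ => hu0 x) with h | h
    · exfalso
      have hux : ∀ x ∈ (univ : Finset V), u x = 0 :=
        (Finset.sum_eq_zero_iff_of_nonneg (fun x _ => hu0 x)).mp h.symm
      have hF0 : F (L wu) = 0 := by
        rw [hrepr]
        refine Finset.sum_eq_zero fun x _ => ?_
        rw [hux x (mem_univ x), mul_zero]
      rw [hF0] at hCwu
      linarith
    · exact h
  set w₀ := fun x => u x / S with hw₀def
  have hw₀W : w₀ ∈ W := by
    refine ⟨fun x => div_nonneg (hu0 x) hSpos.le, fun x => ?_, ?_⟩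
    · rw [hw₀def, div_le_iff₀ hSpos]
      have := hcap x
      linarith [mul_comm γ S]
    · rw [hw₀def, ← Finset.sum_div, ← hSdef, div_self (ne_of_gt hSpos)]
  have hzero : F (L w₀) = 0 := by
    rw [hrepr]
    have hterm : ∀ x, L w₀ x * u x = S * (L w₀ x * w₀ x) := by
      intro x
      have : u x = w₀ x * S := by
        rw [hw₀def, div_mul_cancel₀ _ (ne_of_gt hSpos)]
      rw [this]; ring
    rw [Finset.sum_congr rfl fun x _ => hterm x, ← Finset.mul_sum]
    have hz := stmt8_skew_sum_zero B hB w₀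
    rw [show (∑ x, L w₀ x * w₀ x) = ∑ x, (∑ y, w₀ y * B y x) * w₀ x from rfl, hz, mul_zero]
  have hlt : F (L w₀) < a := hCa _ ⟨w₀, hw₀W, rfl⟩
  rw [hzero] at hlt
  linarith

end Stmt8Aux

/-- For a finite complete multidigraph whose arc set is the union of `k` quasi
orders `≺₁, …, ≺_k`, on more than `1/δ` vertices, there is a probability
distribution `w` and a partition of the vertices into `T₁, …, T_k, R` such that
for `x ∈ T_i` we have `w(x) ≤ 2δ` and `w(N⁻_i(x)) ≥ 1/(2k)`, and `δ ≤ w(x) ≤ 4δ`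
for `x ∈ R`. -/
theorem stmt_8 {V : Type*} [Fintype V] [DecidableEq V] (k : ℕ) (hk : 1 ≤ k)
    (prec : Fin k → V → V → Prop)
    [∀ i x y, Decidable (prec i x y)]
    (hrefl : ∀ i, Reflexive (prec i)) (htrans : ∀ i, Transitive (prec i))
    (hcomplete : ∀ x y : V, x ≠ y → ∃ i, prec i x y ∨ prec i y x)
    (δ : ℝ) (hδ0 : 0 < δ) (hδ1 : δ < 1) (hcard : (1 : ℝ) / δ < Fintype.card V) :
    ∃ (w : V → ℝ) (T : Fin k → Set V) (R : Set V),
      (∀ v, 0 ≤ w v) ∧ (∑ v, w v = 1) ∧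
      (∀ i j : Fin k, i ≠ j → Disjoint (T i) (T j)) ∧
      (∀ i, Disjoint (T i) R) ∧
      ((⋃ i, T i) ∪ R = Set.univ) ∧
      (∀ i : Fin k, ∀ x ∈ T i, w x ≤ 2 * δ ∧
        (1 : ℝ) / (2 * k) ≤ ∑ y ∈ univ.filter (fun y => y = x ∨ prec i y x), w y) ∧
      (∀ x ∈ R, δ ≤ w x ∧ w x ≤ 4 * δ) := by
  classical
  have hk' : (1:ℝ) ≤ (k:ℝ) := by exact_mod_cast hk
  have hcard0 : 0 < Fintype.card V := by
    rcases Nat.eq_zero_or_pos (Fintype.card V) with h | h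
    · exfalso
      rw [h] at hcard
      norm_num at hcard
      have := one_div_pos.mpr hδ0
      linarith
    · exact h
  have hcardR : (0:ℝ) < (Fintype.card V : ℝ) := by exact_mod_cast hcard0
  -- strict-domination predicate and skew payoff matrix
  set SB : V → V → Prop := fun y x => (∃ i, prec i y x) ∧ ¬(∃ i, prec i x y) with hSBdef
  set B : V → V → ℝ := fun y x => if SB y x then 1 else if SB x y then -1 else 0 with hBdef
  have hBskew : ∀ x y, B x y = -B y x := by
    intro x y
    show (if SB x y then (1:ℝ) else if SB y x then -1 else 0)
        = -(if SB y x then (1:ℝ) else if SB x y then -1 else 0)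
    by_cases h1 : SB x y
    · have h2 : ¬ SB y x := fun h => h1.2 h.1
      simp only [if_pos h1, if_neg h2]
      try norm_num
    · by_cases h2 : SB y x
      · simp only [if_pos h2, if_neg h1]
        try norm_num
      · simp only [if_neg h1, if_neg h2]
        try norm_num
  -- get the unbeatable capped strategy
  have hδn : (1:ℝ)/(Fintype.card V) < δ := by
    rw [div_lt_iff₀ hcardR]
    rw [div_lt_iff₀ hδ0] at hcard
    linarith [mul_comm δ (Fintype.card V : ℝ)]
  have hunif : (fun _ : V => (1:ℝ)/(Fintype.card V)) ∈ stmt8Wset V (2*δ) := by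
    refine ⟨fun x => by positivity, fun x => by linarith, ?_⟩
    rw [Finset.sum_const, card_univ, nsmul_eq_mul, mul_one_div,
      div_self (ne_of_gt hcardR)]
  obtain ⟨w, hwW, hwgood⟩ := stmt8_exists_good B hBskew (2*δ) ⟨_, hunif⟩
  obtain ⟨hw0, hwcap, hwsum⟩ := hwW
  set f : V → ℝ := fun x => ∑ y, w y * B y x with hfdef
  have hself : ∑ x, f x * w x = 0 := stmt8_skew_sum_zero B hBskew w
  -- unsaturated vertices have nonnegative balance
  have hfpos : ∀ x, w x < 2*δ → 0 ≤ f x := by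
    intro x hx
    by_contra hneg
    push_neg at hneg
    have hdonor : ∃ y, 0 < w y ∧ f x < f y := by
      by_contra hno
      push_neg at hno
      have hle : ∀ y ∈ (univ : Finset V), f y * w y ≤ f x * w y := by
        intro y _
        rcases eq_or_lt_of_le (hw0 y) with h | h
        · rw [← h, mul_zero, mul_zero]
        · exact mul_le_mul_of_nonneg_right (hno y h) h.le
      have hsum := Finset.sum_le_sum hle
      rw [hself, ← Finset.mul_sum, hwsum, mul_one] at hsum
      linarith
    obtain ⟨y₀, hy₀pos, hy₀f⟩ := hdonor
    have hxy : y₀ ≠ x := by rintro rfl; exact lt_irrefl _ hy₀f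
    set ε := min (w y₀) (2*δ - w x) with hεdef
    have hεpos : 0 < ε := lt_min hy₀pos (by linarith)
    have hεy : ε ≤ w y₀ := min_le_left _ _
    have hεx : ε ≤ 2*δ - w x := min_le_right _ _
    set w' := fun z => w z + (if z = x then ε else 0) - (if z = y₀ then ε else 0) with hw'def
    have hw'eval : ∀ z, w' z = w z + (if z = x then ε else 0) - (if z = y₀ then ε else 0) :=
      fun z => rfl
    have hw'W : w' ∈ stmt8Wset V (2*δ) := by
      refine ⟨fun z => ?_, fun z => ?_, ?_⟩
      · rw [hw'eval z]
        by_cases hzx : z = x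
        · have hzy : ¬ z = y₀ := by rw [hzx]; exact Ne.symm hxy
          rw [if_pos hzx, if_neg hzy]
          have := hw0 z
          linarith
        · rw [if_neg hzx]
          by_cases hzy : z = y₀
          · rw [if_pos hzy]
            rw [hzy]
            linarith
          · rw [if_neg hzy]
            have := hw0 z
            linarith
      · rw [hw'eval z]
        by_cases hzx : z = x
        · have hzy : ¬ z = y₀ := by rw [hzx]; exact Ne.symm hxy
          rw [if_pos hzx, if_neg hzy, hzx]
          linarith
        · rw [if_neg hzx]
          by_cases hzy : z = y₀
          · rw [if_pos hzy]
            have := hwcap z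
            linarith
          · rw [if_neg hzy]
            have := hwcap z
            linarith
      · simp only [hw'def]
        rw [Finset.sum_sub_distrib, Finset.sum_add_distrib, hwsum]
        rw [Finset.sum_ite_eq' univ x (fun _ => ε), Finset.sum_ite_eq' univ y₀ (fun _ => ε)]
        simp
    have hbeat := hwgood w' hw'W
    have hcalc : ∑ z, w' z * f z = ε * f x - ε * f y₀ := by
      have h1 : ∀ z, w' z * f z
          = w z * f z + (if z = x then ε * f z else 0) - (if z = y₀ then ε * f z else 0) := by
        intro z
        rw [hw'eval z]
        by_cases hzx : z = x
        · rw [if_pos hzx, if_pos hzx]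
          by_cases hzy : z = y₀
          · rw [if_pos hzy, if_pos hzy]; ring
          · rw [if_neg hzy, if_neg hzy]; ring
        · rw [if_neg hzx, if_neg hzx]
          by_cases hzy : z = y₀
          · rw [if_pos hzy, if_pos hzy]; ring
          · rw [if_neg hzy, if_neg hzy]; ring
      rw [Finset.sum_congr rfl fun z _ => h1 z]
      rw [Finset.sum_sub_distrib, Finset.sum_add_distrib]
      rw [Finset.sum_ite_eq' univ x (fun z => ε * f z),
        Finset.sum_ite_eq' univ y₀ (fun z => ε * f z)]
      have h2 : ∑ z, w z * f z = 0 := by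
        rw [← hself]
        exact Finset.sum_congr rfl fun z _ => mul_comm _ _
      simp [h2]
    rw [show (∑ z, w' z * ∑ y, w y * B y z) = ∑ z, w' z * f z from rfl, hcalc] at hbeat
    nlinarith
  -- certificates for light vertices
  set Good : Fin k → V → Prop := fun i x =>
    (1:ℝ)/(2*k) ≤ ∑ y ∈ univ.filter (fun y => y = x ∨ prec i y x), w y with hGooddef
  have hcert : ∀ x, w x < δ → ∃ i, Good i x := by
    intro x hx
    have hfx : 0 ≤ f x := hfpos x (by linarith)
    set Ux := univ.filter (fun y => ¬ y = x ∧ ∃ i, prec i y x) with hUxdef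
    set Ax := univ.filter (fun y => SB x y) with hAxdef
    set Sx := univ.filter (fun y => SB y x) with hSxdef
    have hfSA : f x = (∑ y ∈ Sx, w y) - (∑ y ∈ Ax, w y) := by
      have h1 : ∀ y, w y * B y x
          = (if SB y x then w y else 0) - (if SB x y then w y else 0) := by
        intro y
        show w y * (if SB y x then (1:ℝ) else if SB x y then -1 else 0)
            = (if SB y x then w y else 0) - (if SB x y then w y else 0)
        by_cases hs : SB y x
        · have hs2 : ¬ SB x y := fun h => hs.2 h.1
          simp only [if_pos hs, if_neg hs2]
          ring
        · by_cases hs2 : SB x y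
          · simp only [if_neg hs, if_pos hs2]
            ring
          · simp only [if_neg hs, if_neg hs2]
            ring
      show (∑ y : V, w y * B y x) = (∑ y ∈ Sx, w y) - (∑ y ∈ Ax, w y)
      rw [Finset.sum_congr rfl fun y _ => h1 y, Finset.sum_sub_distrib]
      rw [hSxdef, hAxdef, Finset.sum_filter, Finset.sum_filter]
    have hSsubU : Sx ⊆ Ux := by
      intro y hy
      rw [hSxdef, Finset.mem_filter] at hy
      rw [hUxdef, Finset.mem_filter]
      refine ⟨mem_univ y, ?_, hy.2.1⟩
      rintro rfl
      exact hy.2.2 hy.2.1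
    have hpart : w x + (∑ y ∈ Ux, w y) + (∑ y ∈ Ax, w y) = 1 := by
      have hsplit := Finset.sum_filter_add_sum_filter_not univ
        (fun y => y = x ∨ ∃ i, prec i y x) w
      have h1 : univ.filter (fun y => y = x ∨ ∃ i, prec i y x) = insert x Ux := by
        ext y
        rw [Finset.mem_filter, Finset.mem_insert, hUxdef, Finset.mem_filter]
        constructor
        · rintro ⟨-, (rfl | h)⟩
          · exact Or.inl rfl
          · by_cases hyx : y = x
            · exact Or.inl hyx
            · exact Or.inr ⟨mem_univ y, hyx, h⟩
        · rintro (rfl | ⟨-, hyx, h⟩)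
          · exact ⟨mem_univ y, Or.inl rfl⟩
          · exact ⟨mem_univ y, Or.inr h⟩
      have h2 : univ.filter (fun y => ¬(y = x ∨ ∃ i, prec i y x)) = Ax := by
        ext y
        simp only [Finset.mem_filter, mem_univ, true_and, hAxdef, hSBdef, not_or]
        constructor
        · rintro ⟨hyx, hnb⟩
          refine ⟨?_, hnb⟩
          rcases hcomplete x y (fun h => hyx h.symm) with ⟨i, h | h⟩
          · exact ⟨i, h⟩
          · exact absurd ⟨i, h⟩ hnb
        · rintro ⟨⟨i, hi⟩, hnb⟩
          refine ⟨?_, hnb⟩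
          rintro rfl
          exact hnb ⟨i, hi⟩
      rw [h1, h2] at hsplit
      rw [Finset.sum_insert (by
        show x ∉ univ.filter (fun y => ¬ y = x ∧ ∃ i, prec i y x)
        rw [Finset.mem_filter]
        rintro ⟨-, h2, -⟩
        exact h2 rfl)] at hsplit
      rw [hwsum] at hsplit
      linarith
    have hUge : (1 - w x)/2 ≤ ∑ y ∈ Ux, w y := by
      have h1 : ∑ y ∈ Sx, w y ≤ ∑ y ∈ Ux, w y :=
        Finset.sum_le_sum_of_subset_of_nonneg hSsubU (fun y _ _ => hw0 y)
      rw [hfSA] at hfx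
      linarith
    set D : Fin k → Finset V := fun i => univ.filter (fun y => ¬ y = x ∧ prec i y x) with hDdef
    have hUD : ∑ y ∈ Ux, w y ≤ ∑ i, ∑ y ∈ D i, w y := by
      have hUb : Ux = Finset.biUnion univ D := by
        ext y
        simp only [hUxdef, hDdef, Finset.mem_biUnion, Finset.mem_filter, mem_univ, true_and]
        tauto
      rw [hUb]
      -- sum over biUnion is at most sum of sums, by induction
      have hgen : ∀ s : Finset (Fin k),
          ∑ y ∈ s.biUnion D, w y ≤ ∑ i ∈ s, ∑ y ∈ D i, w y := by
        intro s
        induction s using Finset.induction_on with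
        | empty => simp
        | insert a s' hni ih =>
          rw [Finset.biUnion_insert, Finset.sum_insert hni]
          have hsub : (D a ∪ s'.biUnion D) ⊆ D a ∪ s'.biUnion D := subset_rfl
          have h3 : ∑ y ∈ D a ∪ s'.biUnion D, w y
              ≤ ∑ y ∈ D a, w y + ∑ y ∈ s'.biUnion D, w y := by
            have := Finset.sum_union_inter (s₁ := D a) (s₂ := s'.biUnion D) (f := w)
            have hnn : 0 ≤ ∑ y ∈ D a ∩ s'.biUnion D, w y :=
              Finset.sum_nonneg fun y _ => hw0 y
            linarith
          exact h3.trans (by linarith)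
      exact hgen univ
    have hex : ∃ i, (1 - w x)/(2*(k:ℝ)) ≤ ∑ y ∈ D i, w y := by
      by_contra hno
      push_neg at hno
      haveI : Nonempty (Fin k) := ⟨⟨0, hk⟩⟩
      have hlt : ∑ i, ∑ y ∈ D i, w y < ∑ _i : Fin k, (1 - w x)/(2*(k:ℝ)) :=
        Finset.sum_lt_sum_of_nonempty univ_nonempty (fun i _ => hno i)
      rw [Finset.sum_const, card_univ, Fintype.card_fin, nsmul_eq_mul] at hlt
      have hkpos : (0:ℝ) < k := by linarith
      have heq : (k:ℝ) * ((1 - w x)/(2*(k:ℝ))) = (1 - w x)/2 := by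
        field_simp
      rw [heq] at hlt
      linarith
    obtain ⟨i, hi⟩ := hex
    refine ⟨i, ?_⟩
    have hDmem : ∀ z, z ∈ D i ↔ (¬ z = x ∧ prec i z x) := by
      intro z
      show z ∈ univ.filter (fun y => ¬ y = x ∧ prec i y x) ↔ _
      rw [Finset.mem_filter]
      exact ⟨fun h => h.2, fun h => ⟨mem_univ z, h⟩⟩
    have hins : univ.filter (fun y => y = x ∨ prec i y x) = insert x (D i) := by
      ext y
      rw [Finset.mem_filter, Finset.mem_insert, hDmem y]
      constructor
      · rintro ⟨-, (rfl | h)⟩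
        · exact Or.inl rfl
        · by_cases hyx : y = x
          · exact Or.inl hyx
          · exact Or.inr ⟨hyx, h⟩
      · rintro (rfl | ⟨hyx, h⟩)
        · exact ⟨mem_univ y, Or.inl rfl⟩
        · exact ⟨mem_univ y, Or.inr h⟩
    show (1:ℝ)/(2*k) ≤ ∑ y ∈ univ.filter (fun y => y = x ∨ prec i y x), w y
    rw [hins, Finset.sum_insert (by
      intro hc
      exact ((hDmem x).1 hc).1 rfl)]
    have h2k : (0:ℝ) < 2*(k:ℝ) := by linarith
    have hdd : (1:ℝ)/(2*k) - (1 - w x)/(2*(k:ℝ)) ≤ w x := by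
      rw [div_sub_div_same]
      have : (1 : ℝ) - (1 - w x) = w x := by ring
      rw [this]
      exact div_le_self (hw0 x) (by linarith)
    linarith
  -- assemble the partition
  refine ⟨w, fun i => {x | w x < δ ∧ Good i x ∧ ∀ j, Good j x → i ≤ j},
    {x | δ ≤ w x}, hw0, hwsum, ?_, ?_, ?_, ?_, ?_⟩
  · intro i j hij
    rw [Set.disjoint_left]
    rintro x ⟨_, hgi, hmini⟩ ⟨_, hgj, hminj⟩
    exact hij (le_antisymm (hmini j hgj) (hminj i hgi))
  · intro i
    rw [Set.disjoint_left]
    rintro x ⟨hlt, _⟩ hR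
    simp only [Set.mem_setOf_eq] at hR
    linarith
  · ext x
    simp only [Set.mem_union, Set.mem_iUnion, Set.mem_setOf_eq, Set.mem_univ, iff_true]
    by_cases hR : δ ≤ w x
    · exact Or.inr hR
    · push_neg at hR
      left
      obtain ⟨i₀, hi₀⟩ := hcert x hR
      -- take the minimal good index
      set GF : Finset (Fin k) := univ.filter (fun j => Good j x) with hGFdef
      have hGFne : GF.Nonempty := ⟨i₀, by simp [hGFdef, hi₀]⟩
      refine ⟨GF.min' hGFne, hR, ?_, ?_⟩
      · have := GF.min'_mem hGFne
        simp only [hGFdef, Finset.mem_filter] at this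
        exact this.2
      · intro j hj
        exact GF.min'_le j (by simp [hGFdef, hj])
  · rintro i x ⟨hlt, hg, _⟩
    exact ⟨by linarith, hg⟩
  · rintro x hx
    simp only [Set.mem_setOf_eq] at hx
    exact ⟨hx, by linarith [hwcap x]⟩
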